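/- For every α > 0 there are a constant c > 0 depending only on α and an absolute constant d0 ≥ 3 such that for all d ≥ d0, all σ > 0, and all integers s with 1 ≤ s ≤ ⌊√(d log d/2)⌋ + 1: sup_{θ ∈ Θ_s} E_θ[(L̂'_s(y) − L(θ))⁴] ≤ c σ⁴ d⁴ (log d)². -/

import Mathlib

open MeasureTheory ProbabilityTheory

/-- Law of `y = θ + σ·ξ` with `ξ` i.i.d. standard normal: the product of Gaussians `N(θ j, σ²)`. -/
noncomputable def gaussMeasure (d : ℕ) (θ : Fin d → ℝ) (σ : ℝ) : Measure (Fin d → ℝ) :=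
  Measure.pi fun j => gaussianReal (θ j) (Real.toNNReal (σ ^ 2))

/-- The sparsity class `Θ_s`: vectors with at most `s` nonzero coordinates. -/
def Theta (d s : ℕ) : Set (Fin d → ℝ) := {θ | {j | θ j ≠ 0}.ncard ≤ s}

/-- The linear functional `L(θ) = ∑ θ_j`. -/
noncomputable def Lfun (d : ℕ) (θ : Fin d → ℝ) : ℝ := ∑ j, θ j

/-- The rate `Φ^L(σ, s) = σ² s² log(1 + d (log d) / s²)`. -/
noncomputable def PhiL (d : ℕ) (σ : ℝ) (s : ℕ) : ℝ :=
  σ ^ 2 * (s : ℝ) ^ 2 * Real.log (1 + (d : ℝ) * Real.log d / (s : ℝ) ^ 2)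

/-- The variance estimator `σ̂ = 9 (⌊d/2⌋⁻¹ ∑_{j ≤ d/2} y_(j)²)^{1/2}`, where the sum of the
`⌊d/2⌋` smallest among `y_1², …, y_d²` is expressed as the minimum over all subsets `G` of
cardinality `⌊d/2⌋` of `∑_{i ∈ G} y_i²`. -/
noncomputable def sigmahat (d : ℕ) (y : Fin d → ℝ) : ℝ :=
  9 * Real.sqrt (((d / 2 : ℕ) : ℝ)⁻¹ *
    sInf {x : ℝ | ∃ G : Finset (Fin d), G.card = d / 2 ∧ x = ∑ i ∈ G, (y i) ^ 2})

/-- The non-adaptive estimators `L̂'_s` (unknown `σ`, plug-in `σ̂`). -/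
noncomputable def LhatS' (d : ℕ) (α : ℝ) (s : ℕ) (y : Fin d → ℝ) : ℝ :=
  if (s : ℝ) ≤ Real.sqrt ((d : ℝ) * Real.log d / 2) then
    ∑ j, if α * (sigmahat d y) ^ 2 * Real.log (1 + (d : ℝ) * Real.log d / (s : ℝ) ^ 2) < (y j) ^ 2
      then y j else 0
  else ∑ j, y j

open Real
open scoped ENNReal NNReal

lemma add_pow_four_le (a b : ℝ) : (a + b) ^ 4 ≤ 8 * a ^ 4 + 8 * b ^ 4 := by
  have h1 : (a + b) ^ 2 ≤ 2 * a ^ 2 + 2 * b ^ 2 := by nlinarith [sq_nonneg (a - b)]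
  have h2 : ((a + b) ^ 2) ^ 2 ≤ (2 * a ^ 2 + 2 * b ^ 2) ^ 2 :=
    pow_le_pow_left₀ (sq_nonneg _) h1 2
  nlinarith [sq_nonneg (a ^ 2 - b ^ 2)]

noncomputable def M4 : ℝ≥0∞ := ∫⁻ x, ENNReal.ofReal (x ^ 4) ∂(gaussianReal 0 1)

lemma M4_lt_top : M4 < ⊤ := by
  have hint : Integrable (fun x : ℝ => gaussianPDFReal 0 1 x * x ^ 4) := by
    have I : Integrable (fun x : ℝ => x ^ (4:ℝ) * Real.exp (-(1/2) * x ^ 2)) :=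
      integrable_rpow_mul_exp_neg_mul_sq (by norm_num) (by norm_num)
    have I2 : Integrable (fun x : ℝ => x ^ (4:ℕ) * Real.exp (-(1/2) * x ^ 2)) := by
      refine I.congr (Filter.Eventually.of_forall fun x => ?_)
      simp only [show ((4:ℝ)) = ((4:ℕ):ℝ) by norm_num, Real.rpow_natCast]
    refine (I2.const_mul ((Real.sqrt (2 * π))⁻¹)).congr
      (Filter.Eventually.of_forall fun x => ?_)
    simp only [gaussianPDFReal, NNReal.coe_one, mul_one, sub_zero]
    ring_nf
  unfold M4
  rw [gaussianReal_of_var_ne_zero 0 one_ne_zero,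
    lintegral_withDensity_eq_lintegral_mul _ (measurable_gaussianPDF 0 1)
      (by measurability)]
  have : ∀ x : ℝ, (gaussianPDF 0 1 * fun x => ENNReal.ofReal (x ^ 4)) x
      = ENNReal.ofReal (gaussianPDFReal 0 1 x * x ^ 4) := by
    intro x
    simp only [Pi.mul_apply, gaussianPDF_def,
      ← ENNReal.ofReal_mul (gaussianPDFReal_nonneg 0 1 x)]
  simp_rw [this]
  exact hint.lintegral_lt_top

lemma lintegral_eval {d : ℕ} (μ : Fin d → Measure ℝ) [∀ i, IsProbabilityMeasure (μ i)]
    (j : Fin d) {g : ℝ → ℝ≥0∞} (hg : Measurable g) :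
    ∫⁻ y, g (y j) ∂Measure.pi μ = ∫⁻ x, g x ∂(μ j) := by
  have hmap : (Measure.pi μ).map (Function.eval j) = μ j := by
    ext s hs
    rw [Measure.map_apply (measurable_pi_apply j) hs]
    have : Function.eval j ⁻¹' s = Set.pi Set.univ (Function.update (fun _ : Fin d => (Set.univ : Set ℝ)) j s) := by
      rw [Set.eval_preimage]
    rw [this, Measure.pi_pi]
    rw [Finset.prod_eq_single j]
    · simp
    · intro i _ hij; simp [Function.update_of_ne hij]
    · simp
  rw [← hmap, lintegral_map hg (measurable_pi_apply j)]

lemma gauss4 (μ0 σ : ℝ) (hσ : 0 < σ) :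
    ∫⁻ x, ENNReal.ofReal ((x - μ0) ^ 4) ∂(gaussianReal μ0 (Real.toNNReal (σ ^ 2)))
      = ENNReal.ofReal (σ ^ 4) * M4 := by
  have h1 : gaussianReal μ0 (Real.toNNReal (σ ^ 2))
      = (gaussianReal 0 (Real.toNNReal (σ ^ 2))).map (· + μ0) := by
    rw [gaussianReal_map_add_const, zero_add]
  have hv : (⟨σ ^ 2, sq_nonneg σ⟩ : NNReal) * 1 = Real.toNNReal (σ ^ 2) := by
    ext; simp [Real.toNNReal, max_eq_left (sq_nonneg σ)]
  have h2 : gaussianReal 0 (Real.toNNReal (σ ^ 2)) = (gaussianReal 0 1).map (σ * ·) := by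
    rw [gaussianReal_map_const_mul, mul_zero]; exact congrArg _ hv.symm
  rw [h1, lintegral_map (by measurability) (measurable_id'.add_const _)]
  simp only [add_sub_cancel_right]
  rw [h2, lintegral_map (by measurability) (measurable_id'.const_mul _)]
  have : ∀ x : ℝ, ENNReal.ofReal ((σ * x) ^ 4) = ENNReal.ofReal (σ ^ 4) * ENNReal.ofReal (x ^ 4) := by
    intro x
    rw [← ENNReal.ofReal_mul (by positivity)]; ring_nf
  simp_rw [this]
  rw [lintegral_const_mul _ (by measurability)]
  rfl

set_option maxHeartbeats 1000000 in
/-- Lemma 1 (second bound): for all `s ≤ ⌊√(d log d / 2)⌋ + 1`,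
`E_θ (L̂'_s - L)⁴ ≤ c σ⁴ d⁴ (log d)²` uniformly over `Θ_s`. -/
theorem fourth_moment_LhatS' :
    ∀ α : ℝ, 0 < α → ∃ c : ℝ, 0 < c ∧ ∃ d0 : ℕ, 3 ≤ d0 ∧
      ∀ d : ℕ, d0 ≤ d → ∀ σ : ℝ, 0 < σ →
        ∀ s : ℕ, 1 ≤ s → s ≤ Nat.floor (Real.sqrt ((d : ℝ) * Real.log d / 2)) + 1 →
          ∀ θ ∈ Theta d s,
            ∫⁻ y, ENNReal.ofReal ((LhatS' d α s y - Lfun d θ) ^ 4) ∂(gaussMeasure d θ σ)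
              ≤ ENNReal.ofReal (c * σ ^ 4 * (d : ℝ) ^ 4 * (Real.log d) ^ 2) := by
  classical
  intro α hα
  set Mr : ℝ := M4.toReal with hMrdef
  have hMr : 0 ≤ Mr := ENNReal.toReal_nonneg
  have hM4 : M4 = ENNReal.ofReal Mr := (ENNReal.ofReal_toReal M4_lt_top.ne).symm
  refine ⟨(Mr + 1) * (8 + 8 * 243 ^ 2 * α ^ 2), by positivity, 256, by norm_num, ?_⟩
  intro d hd σ hσ s hs1 hs2 θ hθ
  have hd3 : (3 : ℝ) ≤ d := by
    have : (256 : ℕ) ≤ d := hd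
    exact_mod_cast le_trans (by norm_num) this
  have hd0 : (0 : ℝ) < d := by linarith
  have hd256 : (256 : ℝ) ≤ d := by exact_mod_cast hd
  have hlog1 : 1 ≤ Real.log d := by
    rw [Real.le_log_iff_exp_le hd0]
    exact le_trans (le_of_lt (lt_of_lt_of_le Real.exp_one_lt_d9 (by norm_num))) hd3
  have hlognn : (0 : ℝ) ≤ Real.log d := by linarith
  -- s is at most d/4 + 1
  have hsd : 4 * s ≤ d + 4 := by
    have hsqd : Real.sqrt d ≤ (d : ℝ) / 16 := by
      rw [show (d : ℝ) / 16 = Real.sqrt (((d : ℝ) / 16) ^ 2) from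
        (Real.sqrt_sq (by positivity)).symm]
      apply Real.sqrt_le_sqrt
      nlinarith [mul_nonneg hd0.le (sub_nonneg.2 hd256)]
    have hlogle : Real.log d ≤ 2 * Real.sqrt d := by
      have h := Real.log_le_sub_one_of_pos (Real.sqrt_pos.mpr hd0)
      rw [Real.log_sqrt hd0.le] at h
      linarith
    have h1 : Real.sqrt ((d : ℝ) * Real.log d / 2) ≤ (d : ℝ) / 4 := by
      rw [show (d : ℝ) / 4 = Real.sqrt (((d : ℝ) / 4) ^ 2) from
        (Real.sqrt_sq (by positivity)).symm]
      apply Real.sqrt_le_sqrt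
      have e1 : (d : ℝ) * Real.log d ≤ (d : ℝ) * (2 * Real.sqrt d) :=
        mul_le_mul_of_nonneg_left hlogle hd0.le
      have e2 : (d : ℝ) * Real.sqrt d ≤ (d : ℝ) * ((d : ℝ) / 16) :=
        mul_le_mul_of_nonneg_left hsqd hd0.le
      nlinarith [e1, e2]
    have h2 : (s : ℝ) ≤ (d : ℝ) / 4 + 1 := by
      have hfl := Nat.floor_le (Real.sqrt_nonneg ((d : ℝ) * Real.log d / 2))
      have hs2' : (s : ℝ) ≤ (Nat.floor (Real.sqrt ((d : ℝ) * Real.log d / 2)) : ℝ) + 1 := by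
        exact_mod_cast hs2
      linarith
    have : (4 : ℝ) * s ≤ (d : ℝ) + 4 := by push_cast; linarith
    exact_mod_cast this
  -- the zero set of θ contains a set G₀ of cardinality d/2
  have hZcard : d / 2 ≤ (Finset.univ.filter (fun j => θ j = 0)).card := by
    have hset : {j | θ j ≠ 0} = ↑(Finset.univ.filter (fun j : Fin d => θ j ≠ 0)) := by
      ext j; simp
    have hnc : (Finset.univ.filter (fun j : Fin d => θ j ≠ 0)).card ≤ s := by
      have h := hθ
      rw [Theta] at h
      simp only [Set.mem_setOf_eq] at h
      rwa [hset, Set.ncard_coe_finset] at h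
    have hsum := Finset.card_filter_add_card_filter_not
      (s := (Finset.univ : Finset (Fin d))) (p := fun j => θ j = 0)
    simp only [Finset.card_univ, Fintype.card_fin] at hsum
    have hcc : (Finset.univ.filter (fun a : Fin d => ¬ θ a = 0)).card
        = (Finset.univ.filter (fun j : Fin d => θ j ≠ 0)).card := rfl
    omega
  obtain ⟨G₀, hG₀sub, hG₀card⟩ := Finset.exists_subset_card_eq hZcard
  have hG₀zero : ∀ i ∈ G₀, θ i = 0 := fun i hi => by
    have := hG₀sub hi; simpa using (Finset.mem_filter.mp this).2
  have hm1 : 1 ≤ d / 2 := by omega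
  have hmR : (0 : ℝ) < ((d / 2 : ℕ) : ℝ) := by exact_mod_cast hm1
  have hmm : (((d / 2 : ℕ) : ℝ))⁻¹ * ((d / 2 : ℕ) : ℝ) = 1 := inv_mul_cancel₀ hmR.ne'
  have hs1R : (1 : ℝ) ≤ s := by exact_mod_cast hs1
  -- bounds on the logarithmic factor
  have hLgnn : 0 ≤ Real.log (1 + (d : ℝ) * Real.log d / (s : ℝ) ^ 2) := by
    apply Real.log_nonneg
    have : 0 ≤ (d : ℝ) * Real.log d / (s : ℝ) ^ 2 := by positivity
    linarith
  have hLgle : Real.log (1 + (d : ℝ) * Real.log d / (s : ℝ) ^ 2) ≤ 3 * Real.log d := by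
    have h1 : (d : ℝ) * Real.log d / (s : ℝ) ^ 2 ≤ (d : ℝ) * Real.log d := by
      apply div_le_self (by positivity)
      nlinarith [hs1R]
    have hld : Real.log d ≤ (d : ℝ) - 1 := Real.log_le_sub_one_of_pos hd0
    have h2 : 1 + (d : ℝ) * Real.log d ≤ (d : ℝ) ^ 3 := by
      nlinarith [mul_le_mul_of_nonneg_left hld hd0.le,
        mul_nonneg (mul_nonneg hd0.le hd0.le) (sub_nonneg.2 hd3)]
    calc Real.log (1 + (d : ℝ) * Real.log d / (s : ℝ) ^ 2)
        ≤ Real.log ((d : ℝ) ^ 3) := by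
          apply Real.log_le_log (by positivity)
          linarith
      _ = 3 * Real.log d := by rw [Real.log_pow]; push_cast; ring
  set C2 : ℝ := 8 * 243 ^ 2 * α ^ 2 * (d : ℝ) ^ 4 * (Real.log d) ^ 2 with hC2
  have hC2nn : 0 ≤ C2 := by positivity
  -- pointwise bound
  have key : ∀ y : Fin d → ℝ,
      (LhatS' d α s y - Lfun d θ) ^ 4
        ≤ 8 * (d : ℝ) ^ 3 * ∑ j, (y j - θ j) ^ 4
          + C2 * ((((d / 2 : ℕ) : ℝ))⁻¹ * ∑ i ∈ G₀, (y i) ^ 4) := by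
    intro y
    have hsum4nn : (0 : ℝ) ≤ ∑ j, (y j - θ j) ^ 4 :=
      Finset.sum_nonneg fun j _ => by positivity
    have hsumG4nn : (0 : ℝ) ≤ ∑ i ∈ G₀, (y i) ^ 4 :=
      Finset.sum_nonneg fun i _ => by positivity
    have hA4 : (∑ j, (y j - θ j)) ^ 4 ≤ (d : ℝ) ^ 3 * ∑ j, (y j - θ j) ^ 4 := by
      have h1 : (∑ j, (y j - θ j)) ^ 2 ≤ (d : ℝ) * ∑ j, (y j - θ j) ^ 2 := by
        have h := sq_sum_le_card_mul_sum_sq (s := (Finset.univ : Finset (Fin d)))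
          (f := fun j => y j - θ j)
        simpa using h
      have h2 : (∑ j, (y j - θ j) ^ 2) ^ 2 ≤ (d : ℝ) * ∑ j, ((y j - θ j) ^ 2) ^ 2 := by
        have h := sq_sum_le_card_mul_sum_sq (s := (Finset.univ : Finset (Fin d)))
          (f := fun j => (y j - θ j) ^ 2)
        simpa using h
      calc (∑ j, (y j - θ j)) ^ 4 = ((∑ j, (y j - θ j)) ^ 2) ^ 2 := by ring
        _ ≤ ((d : ℝ) * ∑ j, (y j - θ j) ^ 2) ^ 2 := pow_le_pow_left₀ (sq_nonneg _) h1 2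
        _ = (d : ℝ) ^ 2 * (∑ j, (y j - θ j) ^ 2) ^ 2 := by ring
        _ ≤ (d : ℝ) ^ 2 * ((d : ℝ) * ∑ j, ((y j - θ j) ^ 2) ^ 2) := by
            apply mul_le_mul_of_nonneg_left h2 (by positivity)
        _ = (d : ℝ) ^ 3 * ∑ j, ((y j - θ j) ^ 2) ^ 2 := by ring
        _ = (d : ℝ) ^ 3 * ∑ j, (y j - θ j) ^ 4 := by
            congr 1; exact Finset.sum_congr rfl fun j _ => by ring
    rw [LhatS']
    split_ifs with hcase
    · set thr := α * (sigmahat d y) ^ 2 *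
        Real.log (1 + (d : ℝ) * Real.log d / (s : ℝ) ^ 2) with hthrdef
      have hthr_nn : 0 ≤ thr :=
        mul_nonneg (mul_nonneg hα.le (sq_nonneg _)) hLgnn
      have hdiff : (∑ j, if thr < (y j) ^ 2 then y j else 0) - Lfun d θ
          = (∑ j, (y j - θ j)) + ∑ j, ((if thr < (y j) ^ 2 then y j else 0) - y j) := by
        rw [Lfun, ← Finset.sum_add_distrib, ← Finset.sum_sub_distrib]
        exact Finset.sum_congr rfl fun j _ => by ring
      set A := ∑ j, (y j - θ j) with hAdef
      set B := ∑ j, ((if thr < (y j) ^ 2 then y j else 0) - y j) with hBdef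
      have hB : |B| ≤ (d : ℝ) * Real.sqrt thr := by
        calc |B| ≤ ∑ j, |(if thr < (y j) ^ 2 then y j else 0) - y j| :=
              Finset.abs_sum_le_sum_abs _ _
          _ ≤ ∑ _j : Fin d, Real.sqrt thr := by
              apply Finset.sum_le_sum
              intro j _
              split_ifs with h
              · simpa using Real.sqrt_nonneg thr
              · push_neg at h
                rw [zero_sub, abs_neg, ← Real.sqrt_sq_eq_abs]
                exact Real.sqrt_le_sqrt h
          _ = (d : ℝ) * Real.sqrt thr := by
              rw [Finset.sum_const, Finset.card_univ, Fintype.card_fin, nsmul_eq_mul]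
      have hB4 : B ^ 4 ≤ (d : ℝ) ^ 4 * thr ^ 2 := by
        have h1 : B ^ 4 = |B| ^ 4 := by
          rw [pow_abs, abs_of_nonneg (by positivity : (0:ℝ) ≤ B ^ 4)]
        rw [h1]
        calc |B| ^ 4 ≤ ((d : ℝ) * Real.sqrt thr) ^ 4 :=
              pow_le_pow_left₀ (abs_nonneg _) hB 4
          _ = (d : ℝ) ^ 4 * ((Real.sqrt thr ^ 2) ^ 2) := by ring
          _ = (d : ℝ) ^ 4 * thr ^ 2 := by rw [Real.sq_sqrt hthr_nn]
      -- bound on sigmahat squared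
      have hne : ({x : ℝ | ∃ G : Finset (Fin d), G.card = d / 2 ∧
          x = ∑ i ∈ G, (y i) ^ 2}).Nonempty := ⟨∑ i ∈ G₀, (y i) ^ 2, G₀, hG₀card, rfl⟩
      have hbdd : BddBelow {x : ℝ | ∃ G : Finset (Fin d), G.card = d / 2 ∧
          x = ∑ i ∈ G, (y i) ^ 2} := by
        refine ⟨0, fun x hx => ?_⟩
        obtain ⟨G, _, rfl⟩ := hx
        exact Finset.sum_nonneg fun i _ => sq_nonneg _
      have hSnn : 0 ≤ sInf {x : ℝ | ∃ G : Finset (Fin d), G.card = d / 2 ∧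
          x = ∑ i ∈ G, (y i) ^ 2} := by
        apply le_csInf hne
        rintro x ⟨G, _, rfl⟩
        exact Finset.sum_nonneg fun i _ => sq_nonneg _
      have hST : sInf {x : ℝ | ∃ G : Finset (Fin d), G.card = d / 2 ∧
          x = ∑ i ∈ G, (y i) ^ 2} ≤ ∑ i ∈ G₀, (y i) ^ 2 :=
        csInf_le hbdd ⟨G₀, hG₀card, rfl⟩
      have hsig : (sigmahat d y) ^ 2 ≤ 81 * ((((d / 2 : ℕ) : ℝ))⁻¹ * ∑ i ∈ G₀, (y i) ^ 2) := by
        rw [sigmahat, mul_pow, Real.sq_sqrt (by positivity)]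
        have : (9 : ℝ) ^ 2 = 81 := by norm_num
        rw [this]
        apply mul_le_mul_of_nonneg_left _ (by norm_num : (0:ℝ) ≤ 81)
        exact mul_le_mul_of_nonneg_left hST (by positivity)
      set T := ∑ i ∈ G₀, (y i) ^ 2 with hTdef
      have hTnn : 0 ≤ T := Finset.sum_nonneg fun i _ => sq_nonneg _
      have hthrle : thr ≤ 243 * α * ((((d / 2 : ℕ) : ℝ))⁻¹ * T) * Real.log d := by
        rw [hthrdef]
        have hb : α * (sigmahat d y) ^ 2 ≤ α * (81 * ((((d / 2 : ℕ) : ℝ))⁻¹ * T)) :=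
          mul_le_mul_of_nonneg_left hsig hα.le
        have hc : 0 ≤ α * (81 * ((((d / 2 : ℕ) : ℝ))⁻¹ * T)) := by positivity
        calc α * (sigmahat d y) ^ 2 * Real.log (1 + (d : ℝ) * Real.log d / (s : ℝ) ^ 2)
            ≤ α * (81 * ((((d / 2 : ℕ) : ℝ))⁻¹ * T)) * (3 * Real.log d) :=
              mul_le_mul hb hLgle hLgnn hc
          _ = 243 * α * ((((d / 2 : ℕ) : ℝ))⁻¹ * T) * Real.log d := by ring
      have hthr2 : thr ^ 2 ≤ (243 * α * ((((d / 2 : ℕ) : ℝ))⁻¹ * T) * Real.log d) ^ 2 :=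
        pow_le_pow_left₀ hthr_nn hthrle 2
      have hT2 : T ^ 2 ≤ ((d / 2 : ℕ) : ℝ) * ∑ i ∈ G₀, (y i) ^ 4 := by
        have h := sq_sum_le_card_mul_sum_sq (s := G₀) (f := fun i => (y i) ^ 2)
        rw [hG₀card] at h
        calc T ^ 2 ≤ ((d / 2 : ℕ) : ℝ) * ∑ i ∈ G₀, ((y i) ^ 2) ^ 2 := h
          _ = ((d / 2 : ℕ) : ℝ) * ∑ i ∈ G₀, (y i) ^ 4 := by
              congr 1; exact Finset.sum_congr rfl fun i _ => by ring
      have hstep : 8 * ((d : ℝ) ^ 4 * thr ^ 2)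
          ≤ C2 * ((((d / 2 : ℕ) : ℝ))⁻¹ * ∑ i ∈ G₀, (y i) ^ 4) := by
        have h1 : (243 * α * ((((d / 2 : ℕ) : ℝ))⁻¹ * T) * Real.log d) ^ 2
            = 243 ^ 2 * α ^ 2 * (Real.log d) ^ 2 * (((((d / 2 : ℕ) : ℝ))⁻¹) ^ 2 * T ^ 2) := by
          ring
        have h2 : (((((d / 2 : ℕ) : ℝ))⁻¹) ^ 2 * T ^ 2)
            ≤ (((((d / 2 : ℕ) : ℝ))⁻¹) ^ 2 * (((d / 2 : ℕ) : ℝ) * ∑ i ∈ G₀, (y i) ^ 4)) :=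
          mul_le_mul_of_nonneg_left hT2 (by positivity)
        have h3 : (((((d / 2 : ℕ) : ℝ))⁻¹) ^ 2 * (((d / 2 : ℕ) : ℝ) * ∑ i ∈ G₀, (y i) ^ 4))
            = (((d / 2 : ℕ) : ℝ))⁻¹ * ∑ i ∈ G₀, (y i) ^ 4 := by
          have : (((((d / 2 : ℕ) : ℝ))⁻¹) ^ 2 * (((d / 2 : ℕ) : ℝ) * ∑ i ∈ G₀, (y i) ^ 4))
              = ((((d / 2 : ℕ) : ℝ))⁻¹ * ((d / 2 : ℕ) : ℝ))
                * ((((d / 2 : ℕ) : ℝ))⁻¹ * ∑ i ∈ G₀, (y i) ^ 4) := by ring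
          rw [this, hmm, one_mul]
        calc 8 * ((d : ℝ) ^ 4 * thr ^ 2)
            ≤ 8 * ((d : ℝ) ^ 4 * ((243 * α * ((((d / 2 : ℕ) : ℝ))⁻¹ * T) * Real.log d) ^ 2)) := by
              apply mul_le_mul_of_nonneg_left _ (by norm_num : (0:ℝ) ≤ 8)
              exact mul_le_mul_of_nonneg_left hthr2 (by positivity)
          _ = 8 * 243 ^ 2 * α ^ 2 * (d : ℝ) ^ 4 * (Real.log d) ^ 2
                * (((((d / 2 : ℕ) : ℝ))⁻¹) ^ 2 * T ^ 2) := by rw [h1]; ring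
          _ ≤ 8 * 243 ^ 2 * α ^ 2 * (d : ℝ) ^ 4 * (Real.log d) ^ 2
                * (((((d / 2 : ℕ) : ℝ))⁻¹) ^ 2 * (((d / 2 : ℕ) : ℝ) * ∑ i ∈ G₀, (y i) ^ 4)) := by
              apply mul_le_mul_of_nonneg_left h2 (by positivity)
          _ = C2 * ((((d / 2 : ℕ) : ℝ))⁻¹ * ∑ i ∈ G₀, (y i) ^ 4) := by rw [h3, hC2]
      have hAB : (A + B) ^ 4 ≤ 8 * A ^ 4 + 8 * B ^ 4 := add_pow_four_le A B
      rw [hdiff]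
      calc (A + B) ^ 4 ≤ 8 * A ^ 4 + 8 * B ^ 4 := hAB
        _ ≤ 8 * ((d : ℝ) ^ 3 * ∑ j, (y j - θ j) ^ 4) + 8 * ((d : ℝ) ^ 4 * thr ^ 2) := by
            apply add_le_add
            · exact mul_le_mul_of_nonneg_left hA4 (by norm_num)
            · exact mul_le_mul_of_nonneg_left hB4 (by norm_num)
        _ ≤ 8 * (d : ℝ) ^ 3 * ∑ j, (y j - θ j) ^ 4
              + C2 * ((((d / 2 : ℕ) : ℝ))⁻¹ * ∑ i ∈ G₀, (y i) ^ 4) := by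
            rw [mul_assoc]
            exact add_le_add_right hstep _
    · have heq : (∑ j, y j) - Lfun d θ = ∑ j, (y j - θ j) := by
        rw [Lfun, ← Finset.sum_sub_distrib]
      rw [heq]
      have hpos : 0 ≤ C2 * ((((d / 2 : ℕ) : ℝ))⁻¹ * ∑ i ∈ G₀, (y i) ^ 4) := by positivity
      linarith only [hA4, hpos, mul_nonneg (pow_pos hd0 3).le hsum4nn]
  -- integrate the pointwise bound
  haveI : ∀ j : Fin d, IsProbabilityMeasure (gaussianReal (θ j) (Real.toNNReal (σ ^ 2))) :=
    fun j => by infer_instance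
  have hmarg : ∀ j : Fin d, ∫⁻ y, ENNReal.ofReal ((y j - θ j) ^ 4) ∂(gaussMeasure d θ σ)
      = ENNReal.ofReal (σ ^ 4) * M4 := by
    intro j
    rw [gaussMeasure, lintegral_eval _ j
      (g := fun x => ENNReal.ofReal ((x - θ j) ^ 4))
      (((measurable_id.sub_const (θ j)).pow_const 4).ennreal_ofReal)]
    exact gauss4 (θ j) σ hσ
  have hmargG : ∀ i ∈ G₀, ∫⁻ y, ENNReal.ofReal ((y i) ^ 4) ∂(gaussMeasure d θ σ)
      = ENNReal.ofReal (σ ^ 4) * M4 := by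
    intro i hi
    rw [gaussMeasure, lintegral_eval _ i
      (g := fun x => ENNReal.ofReal (x ^ 4))
      ((measurable_id.pow_const 4).ennreal_ofReal), hG₀zero i hi]
    have h := gauss4 0 σ hσ
    simpa using h
  have hmz : ∀ j : Fin d, Measurable fun y : Fin d → ℝ => (y j - θ j) ^ 4 :=
    fun j => by fun_prop
  have hmy4 : ∀ i : Fin d, Measurable fun y : Fin d → ℝ => (y i) ^ 4 :=
    fun i => (measurable_pi_apply i).pow_const 4
  have hmsumE : Measurable fun y : Fin d → ℝ => ∑ j, ENNReal.ofReal ((y j - θ j) ^ 4) :=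
    Finset.measurable_sum _ fun j _ => (hmz j).ennreal_ofReal
  have hmsumGE : Measurable fun y : Fin d → ℝ => ∑ i ∈ G₀, ENNReal.ofReal ((y i) ^ 4) :=
    Finset.measurable_sum _ fun i _ => (hmy4 i).ennreal_ofReal
  have hmeas1 : Measurable fun y : Fin d → ℝ =>
      ENNReal.ofReal (8 * (d : ℝ) ^ 3 * ∑ j, (y j - θ j) ^ 4) :=
    ((Finset.measurable_sum _ fun j _ => hmz j).const_mul _).ennreal_ofReal
  calc ∫⁻ y, ENNReal.ofReal ((LhatS' d α s y - Lfun d θ) ^ 4) ∂(gaussMeasure d θ σ)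
      ≤ ∫⁻ y, ENNReal.ofReal (8 * (d : ℝ) ^ 3 * ∑ j, (y j - θ j) ^ 4
          + C2 * ((((d / 2 : ℕ) : ℝ))⁻¹ * ∑ i ∈ G₀, (y i) ^ 4)) ∂(gaussMeasure d θ σ) :=
        lintegral_mono fun y => ENNReal.ofReal_le_ofReal (key y)
    _ ≤ ∫⁻ y, (ENNReal.ofReal (8 * (d : ℝ) ^ 3 * ∑ j, (y j - θ j) ^ 4)
          + ENNReal.ofReal (C2 * ((((d / 2 : ℕ) : ℝ))⁻¹ * ∑ i ∈ G₀, (y i) ^ 4)))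
            ∂(gaussMeasure d θ σ) :=
        lintegral_mono fun y => ENNReal.ofReal_add_le
    _ = (∫⁻ y, ENNReal.ofReal (8 * (d : ℝ) ^ 3 * ∑ j, (y j - θ j) ^ 4) ∂(gaussMeasure d θ σ))
          + ∫⁻ y, ENNReal.ofReal (C2 * ((((d / 2 : ℕ) : ℝ))⁻¹ * ∑ i ∈ G₀, (y i) ^ 4))
            ∂(gaussMeasure d θ σ) := lintegral_add_left hmeas1 _
    _ = ENNReal.ofReal (8 * (d : ℝ) ^ 3) * ((d : ℝ≥0∞) * (ENNReal.ofReal (σ ^ 4) * M4))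
          + ENNReal.ofReal (C2 * (((d / 2 : ℕ) : ℝ))⁻¹)
            * (((d / 2 : ℕ) : ℝ≥0∞) * (ENNReal.ofReal (σ ^ 4) * M4)) := by
        congr 1
        · have hsplit : ∀ y : Fin d → ℝ, ENNReal.ofReal (∑ j, (y j - θ j) ^ 4)
              = ∑ j, ENNReal.ofReal ((y j - θ j) ^ 4) :=
            fun y => ENNReal.ofReal_sum_of_nonneg (fun j _ => by positivity)
          simp_rw [ENNReal.ofReal_mul (by positivity : (0:ℝ) ≤ 8 * (d : ℝ) ^ 3), hsplit]
          rw [lintegral_const_mul _ hmsumE,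
            lintegral_finset_sum _ (fun j _ => (hmz j).ennreal_ofReal)]
          simp_rw [hmarg]
          rw [Finset.sum_const, Finset.card_univ, Fintype.card_fin, nsmul_eq_mul]
        · have hre : ∀ y : Fin d → ℝ, C2 * ((((d / 2 : ℕ) : ℝ))⁻¹ * ∑ i ∈ G₀, (y i) ^ 4)
              = (C2 * (((d / 2 : ℕ) : ℝ))⁻¹) * ∑ i ∈ G₀, (y i) ^ 4 := fun y => by ring
          have hsplitG : ∀ y : Fin d → ℝ, ENNReal.ofReal (∑ i ∈ G₀, (y i) ^ 4)
              = ∑ i ∈ G₀, ENNReal.ofReal ((y i) ^ 4) :=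
            fun y => ENNReal.ofReal_sum_of_nonneg (fun i _ => by positivity)
          simp_rw [hre, ENNReal.ofReal_mul (by positivity : (0:ℝ) ≤ C2 * (((d / 2 : ℕ) : ℝ))⁻¹),
            hsplitG]
          rw [lintegral_const_mul _ hmsumGE,
            lintegral_finset_sum _ (fun i _ => (hmy4 i).ennreal_ofReal)]
          rw [Finset.sum_congr rfl hmargG, Finset.sum_const, hG₀card, nsmul_eq_mul]
    _ ≤ ENNReal.ofReal ((Mr + 1) * (8 + 8 * 243 ^ 2 * α ^ 2) * σ ^ 4 * (d : ℝ) ^ 4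
          * (Real.log d) ^ 2) := by
        rw [hM4]
        rw [show ((d : ℝ≥0∞)) = ENNReal.ofReal (d : ℝ) from (ENNReal.ofReal_natCast d).symm,
          show (((d / 2 : ℕ) : ℝ≥0∞)) = ENNReal.ofReal ((d / 2 : ℕ) : ℝ) from
            (ENNReal.ofReal_natCast _).symm]
        rw [← ENNReal.ofReal_mul (by positivity : (0:ℝ) ≤ σ ^ 4),
          ← ENNReal.ofReal_mul (by positivity : (0:ℝ) ≤ (d : ℝ)),
          ← ENNReal.ofReal_mul (by positivity : (0:ℝ) ≤ 8 * (d : ℝ) ^ 3),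
          ← ENNReal.ofReal_mul (by positivity : (0:ℝ) ≤ ((d / 2 : ℕ) : ℝ)),
          ← ENNReal.ofReal_mul (by positivity : (0:ℝ) ≤ C2 * (((d / 2 : ℕ) : ℝ))⁻¹),
          ← ENNReal.ofReal_add (by positivity) (by positivity)]
        apply ENNReal.ofReal_le_ofReal
        have hlog2 : 1 ≤ (Real.log d) ^ 2 := by
          nlinarith [hlog1, sq_nonneg (Real.log d - 1)]
        have he : C2 * (((d / 2 : ℕ) : ℝ))⁻¹ * (((d / 2 : ℕ) : ℝ) * (σ ^ 4 * Mr))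
            = C2 * (σ ^ 4 * Mr) := by
          have : C2 * (((d / 2 : ℕ) : ℝ))⁻¹ * (((d / 2 : ℕ) : ℝ) * (σ ^ 4 * Mr))
              = ((((d / 2 : ℕ) : ℝ))⁻¹ * ((d / 2 : ℕ) : ℝ)) * (C2 * (σ ^ 4 * Mr)) := by ring
          rw [this, hmm, one_mul]
        rw [he, hC2]
        have hKnn : (0:ℝ) ≤ 8 * 243 ^ 2 * α ^ 2 := by positivity
        have hP : (0:ℝ) ≤ σ ^ 4 * (d : ℝ) ^ 4 := by positivity
        have hfrac : 8 * Mr + (8 * 243 ^ 2 * α ^ 2) * Mr * (Real.log d) ^ 2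
            ≤ (Mr + 1) * (8 + 8 * 243 ^ 2 * α ^ 2) * (Real.log d) ^ 2 := by
          nlinarith [mul_nonneg hMr (sub_nonneg.2 hlog2),
            mul_nonneg hKnn (sub_nonneg.2 hlog2), hlog2]
        calc 8 * (d : ℝ) ^ 3 * ((d : ℝ) * (σ ^ 4 * Mr))
              + 8 * 243 ^ 2 * α ^ 2 * (d : ℝ) ^ 4 * (Real.log d) ^ 2 * (σ ^ 4 * Mr)
            = (σ ^ 4 * (d : ℝ) ^ 4)
                * (8 * Mr + (8 * 243 ^ 2 * α ^ 2) * Mr * (Real.log d) ^ 2) := by ring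
          _ ≤ (σ ^ 4 * (d : ℝ) ^ 4)
                * ((Mr + 1) * (8 + 8 * 243 ^ 2 * α ^ 2) * (Real.log d) ^ 2) :=
              mul_le_mul_of_nonneg_left hfrac hP
          _ = (Mr + 1) * (8 + 8 * 243 ^ 2 * α ^ 2) * σ ^ 4 * (d : ℝ) ^ 4
                * (Real.log d) ^ 2 := by ring
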